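/- Vanishing matrix coefficients imply proper action on H∖{0}: let G be a locally compact, second-countable topological group, H a complex Hilbert space, and π a group homomorphism from G to the group of unitary (complex-linear isometric) automorphisms of H such that for every v ∈ H the orbit map g ↦ π(g)v is continuous. Assume that all matrix coefficients vanish at infinity, i.e. for all v, w ∈ H the function g ↦ ⟨π(g)v, w⟩ tends to 0 along the cocompact filter of G. Then G acts properly on H ∖ {0}: for every compact subset C ⊆ H with 0 ∉ C, the set C_G = {g ∈ G : there exists v ∈ C with π(g)v ∈ C} is compact. -/

import Mathlib

open Filter

/-- Vanishing matrix coefficients imply proper action on `H ∖ {0}`: if all matrix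
coefficients of a unitary representation vanish at infinity, then for every compact set
`C ⊆ H` not containing `0`, the set `{g : π(g)C ∩ C ≠ ∅}` is compact. -/
theorem proper_action_of_vanishing_matrix_coefficients
    {G : Type*} [Group G] [TopologicalSpace G] [IsTopologicalGroup G]
    [LocallyCompactSpace G] [SecondCountableTopology G]
    {H : Type*} [NormedAddCommGroup H] [InnerProductSpace ℂ H] [CompleteSpace H]
    (ρ : G →* (H ≃ₗᵢ[ℂ] H))
    (hcont : ∀ v : H, Continuous fun g => ρ g v)
    (hvanish : ∀ v w : H,
      Tendsto (fun g => (inner ℂ (ρ g v) w : ℂ)) (cocompact G) (nhds 0)) :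
    ∀ C : Set H, IsCompact C → (0 : H) ∉ C →
      IsCompact {g : G | ∃ v ∈ C, ρ g v ∈ C} := by
  intro C hC hC0
  rcases C.eq_empty_or_nonempty with rfl | hne
  · simp
  -- joint continuity of the action map
  have hF : Continuous fun p : G × H => ρ p.1 p.2 := by
    rw [continuous_iff_continuousAt]
    rintro ⟨g₀, v₀⟩
    rw [ContinuousAt, tendsto_iff_norm_sub_tendsto_zero]
    have hle : ∀ p : G × H,
        ‖ρ p.1 p.2 - ρ g₀ v₀‖ ≤ ‖p.2 - v₀‖ + ‖ρ p.1 v₀ - ρ g₀ v₀‖ := by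
      intro p
      calc ‖ρ p.1 p.2 - ρ g₀ v₀‖
          ≤ ‖ρ p.1 p.2 - ρ p.1 v₀‖ + ‖ρ p.1 v₀ - ρ g₀ v₀‖ :=
            norm_sub_le_norm_sub_add_norm_sub _ _ _
        _ = ‖p.2 - v₀‖ + ‖ρ p.1 v₀ - ρ g₀ v₀‖ := by
            rw [← map_sub, (ρ p.1).norm_map]
    have hcont2 : Continuous fun p : G × H => ‖p.2 - v₀‖ + ‖ρ p.1 v₀ - ρ g₀ v₀‖ := by
      apply Continuous.add
      · exact (continuous_snd.sub continuous_const).norm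
      · exact (((hcont v₀).comp continuous_fst).sub continuous_const).norm
    have htend : Tendsto (fun p : G × H => ‖p.2 - v₀‖ + ‖ρ p.1 v₀ - ρ g₀ v₀‖)
        (nhds (g₀, v₀)) (nhds 0) := by
      have := hcont2.tendsto (g₀, v₀)
      simpa using this
    exact squeeze_zero (fun p => norm_nonneg _) hle htend
  -- a positive lower bound on norms over C
  obtain ⟨v₀, hv₀C, hv₀min⟩ := hC.exists_isMinOn hne continuous_norm.continuousOn
  set ε : ℝ := ‖v₀‖ with hεdef
  have hε : 0 < ε := by
    rw [hεdef, norm_pos_iff]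
    rintro rfl; exact hC0 hv₀C
  -- an upper bound on norms over C
  obtain ⟨v₁, hv₁C, hv₁max⟩ := hC.exists_isMaxOn hne continuous_norm.continuousOn
  set M : ℝ := ‖v₁‖ with hMdef
  have hεM : ε ≤ M := hv₁max hv₀C
  have hM : 0 < M := lt_of_lt_of_le hε hεM
  set δ : ℝ := ε ^ 2 / (4 * M) with hδdef
  have hδ : 0 < δ := by positivity
  -- a finite δ-net of C
  obtain ⟨t, htC, htcov⟩ := hC.elim_nhds_subcover (fun v => Metric.ball v δ)
    (fun v _ => Metric.ball_mem_nhds v hδ)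
  -- along the cocompact filter, all matrix coefficients at net points are small
  have hU : ∀ᶠ g in cocompact G, ∀ i ∈ t, ∀ j ∈ t,
      ‖(inner ℂ (ρ g i) j : ℂ)‖ < ε ^ 2 / 2 := by
    rw [eventually_all_finset]
    intro i _
    rw [eventually_all_finset]
    intro j _
    have h := (hvanish i j).norm
    rw [norm_zero] at h
    exact h.eventually_lt_const (by positivity)
  obtain ⟨K, hK, hKU⟩ := mem_cocompact.mp hU
  -- the return set is contained in K
  have key : {g : G | ∃ v ∈ C, ρ g v ∈ C} ⊆ K := by
    intro g hg
    by_contra hgK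
    have hgU : ∀ i ∈ t, ∀ j ∈ t, ‖(inner ℂ (ρ g i) j : ℂ)‖ < ε ^ 2 / 2 := hKU hgK
    obtain ⟨v, hvC, hwC⟩ := hg
    set w : H := ρ g v with hwdef
    obtain ⟨i, hit, hvi⟩ : ∃ i ∈ t, v ∈ Metric.ball i δ := by
      simpa using htcov hvC
    obtain ⟨j, hjt, hwj⟩ : ∃ j ∈ t, w ∈ Metric.ball j δ := by
      simpa using htcov hwC
    have hiC : i ∈ C := htC i hit
    have hεw : ε ≤ ‖w‖ := hv₀min hwC
    have hwM : ‖w‖ ≤ M := hv₁max hwC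
    have hiM : ‖i‖ ≤ M := hv₁max hiC
    have hvi' : ‖v - i‖ ≤ δ := by
      rw [← dist_eq_norm]; exact le_of_lt (Metric.mem_ball.mp hvi)
    have hwj' : ‖w - j‖ ≤ δ := by
      rw [← dist_eq_norm]; exact le_of_lt (Metric.mem_ball.mp hwj)
    -- the matrix coefficient at (v, w) is large
    have h1 : ε ^ 2 ≤ ‖(inner ℂ w w : ℂ)‖ := by
      rw [inner_self_eq_norm_sq_to_K, norm_pow, RCLike.norm_ofReal, abs_norm]
      exact pow_le_pow_left₀ hε.le hεw 2
    -- it is close to the one at a net point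
    have h2 : ‖(inner ℂ w w : ℂ) - inner ℂ (ρ g i) j‖ ≤ δ * M + M * δ := by
      have heq : (inner ℂ w w : ℂ) - inner ℂ (ρ g i) j
          = inner ℂ (ρ g v - ρ g i) w + inner ℂ (ρ g i) (w - j) := by
        rw [inner_sub_left, inner_sub_right, hwdef]
        ring
      rw [heq]
      calc ‖(inner ℂ (ρ g v - ρ g i) w : ℂ) + inner ℂ (ρ g i) (w - j)‖
          ≤ ‖(inner ℂ (ρ g v - ρ g i) w : ℂ)‖ + ‖(inner ℂ (ρ g i) (w - j) : ℂ)‖ :=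
            norm_add_le _ _
        _ ≤ ‖ρ g v - ρ g i‖ * ‖w‖ + ‖ρ g i‖ * ‖w - j‖ :=
            add_le_add (norm_inner_le_norm _ _) (norm_inner_le_norm _ _)
        _ = ‖v - i‖ * ‖w‖ + ‖i‖ * ‖w - j‖ := by
            rw [← map_sub, (ρ g).norm_map (v - i), (ρ g).norm_map i]
        _ ≤ δ * M + M * δ := by
            apply add_le_add
            · exact mul_le_mul hvi' hwM (norm_nonneg _) hδ.le
            · exact mul_le_mul hiM hwj' (norm_nonneg _) hM.le
    have h3 : δ * M + M * δ = ε ^ 2 / 2 := by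
      rw [hδdef]; field_simp; ring
    have h4 : ε ^ 2 / 2 ≤ ‖(inner ℂ (ρ g i) j : ℂ)‖ := by
      have := norm_sub_norm_le ((inner ℂ w w : ℂ)) (inner ℂ (ρ g i) j)
      have := this.trans h2
      rw [h3] at this
      linarith
    exact absurd (hgU i hit j hjt) (not_lt.mpr h4)
  -- conclude compactness via a closed subset of a compact product
  haveI : CompactSpace ↥C := isCompact_iff_compactSpace.mp hC
  set T : Set (G × ↥C) := {p | ρ p.1 (p.2 : H) ∈ C} with hTdef
  have hTclosed : IsClosed T := by
    have : Continuous fun p : G × ↥C => ρ p.1 (p.2 : H) :=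
      hF.comp (continuous_fst.prodMk (continuous_subtype_val.comp continuous_snd))
    exact hC.isClosed.preimage this
  have hTsub : T ⊆ K ×ˢ (Set.univ : Set ↥C) := by
    rintro ⟨g, v⟩ hp
    exact ⟨key ⟨v, v.2, hp⟩, trivial⟩
  have hTcompact : IsCompact T :=
    (hK.prod isCompact_univ).of_isClosed_subset hTclosed hTsub
  have himg : {g : G | ∃ v ∈ C, ρ g v ∈ C} = Prod.fst '' T := by
    ext g
    constructor
    · rintro ⟨v, hv, hw⟩
      exact ⟨(g, ⟨v, hv⟩), hw, rfl⟩
    · rintro ⟨⟨g', v⟩, hp, rfl⟩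
      exact ⟨v, v.2, hp⟩
  rw [himg]
  exact hTcompact.image continuous_fst
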